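/- Suppose rank(Σ_{l=1}^L B_l²) = K. Then the positive semidefinite matrix S̃_sum = Σ_{l=1}^L Ω_l² satisfies λ_K(S̃_sum) ≥ θ_min⁴ n_min² λ_K(Σ_{l=1}^L B_l²), where λ_K denotes the K-th largest eigenvalue. -/

import Mathlib

open Matrix MeasureTheory ProbabilityTheory
open scoped BigOperators ENNReal

noncomputable section

/-- Euclidean norm of a finite real vector. -/
def vecNorm {m : ℕ} (v : Fin m → ℝ) : ℝ := Real.sqrt (∑ i, v i ^ 2)

/-- Frobenius norm of a real matrix. -/
def frobNorm {m p : ℕ} (M : Matrix (Fin m) (Fin p) ℝ) : ℝ :=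
  Real.sqrt (∑ i, ∑ j, M i j ^ 2)

/-- Spectral norm (ℓ² operator norm) of a real matrix. -/
def specNorm {m p : ℕ} (M : Matrix (Fin m) (Fin p) ℝ) : ℝ :=
  sSup ((fun x => vecNorm (M.mulVec x)) '' {x : Fin p → ℝ | vecNorm x ≤ 1})

open Classical in
/-- The k-th largest (1-indexed) eigenvalue in magnitude of a real symmetric matrix
(`0` if the matrix is not Hermitian). -/
def kthAbsEig {m : ℕ} (M : Matrix (Fin m) (Fin m) ℝ) (k : ℕ) : ℝ :=
  if hM : M.IsHermitian then
    (((Finset.univ : Finset (Fin m)).val.map fun i => |hM.eigenvalues i|).sort (· ≤ ·)).getD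
      (m - k) 0
  else 0

/-- `Z` is a community membership matrix: 0/1 entries, exactly one 1 per row,
every column nonzero. -/
def IsMembership {n K : ℕ} (Z : Matrix (Fin n) (Fin K) ℝ) : Prop :=
  (∀ i k, Z i k = 0 ∨ Z i k = 1) ∧ (∀ i, ∑ k, Z i k = 1) ∧ (∀ k, ∃ i, Z i k = 1)

/-- The MLDCSBM model hypotheses on the parameters `Z`, `θ`, `B`. -/
def MLDCSBM {n L K : ℕ} (Z : Matrix (Fin n) (Fin K) ℝ) (θ : Fin n → ℝ)
    (B : Fin L → Matrix (Fin K) (Fin K) ℝ) : Prop :=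
  IsMembership Z ∧ (∀ i, 0 < θ i ∧ θ i ≤ 1) ∧
    (∀ l, (B l).IsSymm ∧ ∀ a b, 0 ≤ B l a b ∧ B l a b ≤ 1)

/-- Ω_l = Θ Z B_l Zᵀ Θ. -/
def OmegaL {n K : ℕ} (θ : Fin n → ℝ) (Z : Matrix (Fin n) (Fin K) ℝ)
    (Bl : Matrix (Fin K) (Fin K) ℝ) : Matrix (Fin n) (Fin n) ℝ :=
  Matrix.diagonal θ * Z * Bl * Zᵀ * Matrix.diagonal θ

def thetaMin {n : ℕ} (θ : Fin n → ℝ) : ℝ := sInf (Set.range θ)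
def thetaMax {n : ℕ} (θ : Fin n → ℝ) : ℝ := sSup (Set.range θ)

/-- Minimum community size. -/
def nMin {n K : ℕ} (Z : Matrix (Fin n) (Fin K) ℝ) : ℝ :=
  sInf (Set.range fun k : Fin K => ∑ i, Z i k)

/-- Maximum community size. -/
def nMax {n K : ℕ} (Z : Matrix (Fin n) (Fin K) ℝ) : ℝ :=
  sSup (Set.range fun k : Fin K => ∑ i, Z i k)

/-- Column `k` of a matrix, as a vector. -/
def colVec {n K : ℕ} (U : Matrix (Fin n) (Fin K) ℝ) (k : Fin K) : Fin n → ℝ := fun i => U i k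

/-- Row-normalized version of a matrix: each row divided by its Euclidean norm. -/
def rowNormalize {n K : ℕ} (U : Matrix (Fin n) (Fin K) ℝ) : Matrix (Fin n) (Fin K) ℝ :=
  fun i k => U i k / vecNorm (fun j => U i j)

/-- Diagonal degree matrix of a square matrix. -/
def degDiag {n : ℕ} (M : Matrix (Fin n) (Fin n) ℝ) : Matrix (Fin n) (Fin n) ℝ :=
  Matrix.diagonal fun i => ∑ j, M i j


lemma sorted_getD_ge {c : ℝ} (s : Multiset ℝ) {n K : ℕ} (hcard : Multiset.card s = n)
    (hK : 0 < K) (hKn : K ≤ n)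
    (hcount : K ≤ Multiset.card (s.filter (fun x => c ≤ x))) :
    c ≤ (s.sort (· ≤ ·)).getD (n - K) 0 := by
  set l := s.sort (· ≤ ·) with hl
  have hlen : l.length = n := by rw [hl, Multiset.length_sort, hcard]
  have hsorted : l.Pairwise (· ≤ ·) := Multiset.pairwise_sort s _
  have hidx : n - K < l.length := by omega
  rw [List.getD_eq_getElem l 0 hidx]
  by_contra hlt
  push_neg at hlt
  have hs : (l : Multiset ℝ) = s := Multiset.sort_eq s _
  have hcount' : K ≤ (l.filter (fun x => decide (c ≤ x))).length := by
    rw [← hs] at hcount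
    simpa [Multiset.filter_coe, Multiset.coe_card] using hcount
  have htake : ∀ x ∈ l.take (n - K + 1), x < c := by
    intro x hx
    obtain ⟨i, hi, rfl⟩ := List.getElem_of_mem hx
    rw [List.length_take] at hi
    rw [List.getElem_take]
    have hle : l.get ⟨i, by omega⟩ ≤ l.get ⟨n - K, hidx⟩ :=
      hsorted.rel_get_of_le (by simp [Fin.le_def]; omega)
    simp only [List.get_eq_getElem] at hle
    exact lt_of_le_of_lt hle hlt
  have hbound : (l.filter fun x => decide (c ≤ x)).length ≤ K - 1 := by
    conv_lhs => rw [← List.take_append_drop (n - K + 1) l]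
    rw [List.filter_append, List.length_append]
    have h1 : (l.take (n - K + 1)).filter (fun x => decide (c ≤ x)) = [] := by
      rw [List.filter_eq_nil_iff]
      intro a ha
      simpa using not_le.mpr (htake a ha)
    rw [h1]
    simp only [List.length_nil, zero_add]
    calc ((l.drop (n - K + 1)).filter fun x => decide (c ≤ x)).length
        ≤ (l.drop (n - K + 1)).length := List.length_filter_le _ _
      _ = n - (n - K + 1) := by rw [List.length_drop, hlen]
      _ ≤ K - 1 := by omega
  omega

lemma getD_mem_of_lt {l : List ℝ} {i : ℕ} (h : i < l.length) : l.getD i 0 ∈ l := by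
  rw [List.getD_eq_getElem l 0 h]; exact List.getElem_mem _

lemma sorted_getD_zero_le {s : Multiset ℝ} {x : ℝ} (hx : x ∈ s) :
    (s.sort (· ≤ ·)).getD 0 0 ≤ x := by
  set l := s.sort (· ≤ ·) with hl
  have hxl : x ∈ l := by rw [hl, Multiset.mem_sort]; exact hx
  obtain ⟨j, hj, rfl⟩ := List.getElem_of_mem hxl
  have h0 : 0 < l.length := by omega
  rw [List.getD_eq_getElem l 0 h0]
  have hle : l.get ⟨0, h0⟩ ≤ l.get ⟨j, hj⟩ :=
    (Multiset.pairwise_sort s _).rel_get_of_le (by simp [Fin.le_def])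
  simpa using hle

lemma star_eq_transpose_real {m : ℕ} (U : Matrix (Fin m) (Fin m) ℝ) : star U = Uᵀ := by
  ext i j; simp [Matrix.star_apply]

lemma dot_mulVec_left {m p : ℕ} (U : Matrix (Fin m) (Fin p) ℝ) (u : Fin m → ℝ) (z : Fin p → ℝ) :
    u ⬝ᵥ (U *ᵥ z) = (Uᵀ *ᵥ u) ⬝ᵥ z := by
  rw [Matrix.dotProduct_mulVec, Matrix.mulVec_transpose]

lemma spectral_quad {m : ℕ} {S : Matrix (Fin m) (Fin m) ℝ} (hS : S.IsHermitian) (u : Fin m → ℝ) :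
    u ⬝ᵥ S *ᵥ u
        = ∑ i, hS.eigenvalues i * (((hS.eigenvectorUnitary : Matrix (Fin m) (Fin m) ℝ))ᵀ *ᵥ u) i ^ 2
      ∧ u ⬝ᵥ u = ∑ i, (((hS.eigenvectorUnitary : Matrix (Fin m) (Fin m) ℝ))ᵀ *ᵥ u) i ^ 2 := by
  set U := (hS.eigenvectorUnitary : Matrix (Fin m) (Fin m) ℝ) with hU
  have hU1 : U * Uᵀ = 1 := by
    rw [← star_eq_transpose_real]; exact (Matrix.mem_unitaryGroup_iff).mp hS.eigenvectorUnitary.2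
  set x := Uᵀ *ᵥ u with hx
  have hux : U *ᵥ x = u := by rw [hx, mulVec_mulVec, hU1, one_mulVec]
  constructor
  · conv_lhs => rw [hS.spectral_theorem, Unitary.conjStarAlgAut_apply, ← hU, star_eq_transpose_real, RCLike.ofReal_real_eq_id]
    rw [← Matrix.mulVec_mulVec, ← Matrix.mulVec_mulVec, dot_mulVec_left, ← hx]
    simp only [Function.id_comp, Matrix.mulVec_diagonal, dotProduct]
    refine Finset.sum_congr rfl fun i _ => by ring
  · have hU2 : Uᵀ * U = 1 := by
      rw [← star_eq_transpose_real]; exact (Matrix.mem_unitaryGroup_iff').mp hS.eigenvectorUnitary.2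
    conv_lhs => rw [← hux]
    rw [dot_mulVec_left, Matrix.mulVec_mulVec, hU2, Matrix.one_mulVec]
    simp only [dotProduct]
    refine Finset.sum_congr rfl fun i _ => by ring

lemma rayleigh_ge_min {K : ℕ} {M : Matrix (Fin K) (Fin K) ℝ} (hM : M.IsHermitian)
    {β : ℝ} (hβ : ∀ i, β ≤ hM.eigenvalues i) (u : Fin K → ℝ) :
    β * (u ⬝ᵥ u) ≤ u ⬝ᵥ M *ᵥ u := by
  obtain ⟨h1, h2⟩ := spectral_quad hM u
  rw [h1, h2, Finset.mul_sum]
  exact Finset.sum_le_sum fun i _ => mul_le_mul_of_nonneg_right (hβ i) (sq_nonneg _)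

open Classical in
lemma count_ge_of_quad {m K : ℕ} {S : Matrix (Fin m) (Fin m) ℝ} (hS : S.IsHermitian)
    {A : Matrix (Fin m) (Fin K) ℝ} (hinj : Function.Injective A.mulVec) {c : ℝ}
    (hquad : ∀ w : Fin K → ℝ, c * ((A *ᵥ w) ⬝ᵥ (A *ᵥ w)) ≤ (A *ᵥ w) ⬝ᵥ S *ᵥ (A *ᵥ w)) :
    K ≤ (Finset.univ.filter fun i => c ≤ hS.eigenvalues i).card := by
  by_contra hcon
  push_neg at hcon
  set ψ : (Fin K → ℝ) →ₗ[ℝ] ({i : Fin m // c ≤ hS.eigenvalues i} → ℝ) :=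
    { toFun := fun w => fun i =>
        (((hS.eigenvectorUnitary : Matrix (Fin m) (Fin m) ℝ))ᵀ *ᵥ (A *ᵥ w)) i.val
      map_add' := fun a b => by funext i; simp [Matrix.mulVec_add]
      map_smul' := fun r a => by funext i; simp [Matrix.mulVec_smul] } with hψ
  have hnotinj : ¬ Function.Injective ψ := by
    intro hinjψ
    have h1 := LinearMap.finrank_le_finrank_of_injective hinjψ
    rw [Module.finrank_pi ℝ, Module.finrank_pi ℝ, Fintype.card_fin, Fintype.card_subtype] at h1
    omega
  rw [Function.not_injective_iff] at hnotinj
  obtain ⟨a, b, hab, hne⟩ := hnotinj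
  set w := a - b with hw
  have hw0 : w ≠ 0 := sub_ne_zero.mpr hne
  have hψw : ψ w = 0 := by rw [hw, map_sub, hab, sub_self]
  set v := A *ᵥ w with hv
  obtain ⟨h1, h2⟩ := spectral_quad hS v
  set x := ((hS.eigenvectorUnitary : Matrix (Fin m) (Fin m) ℝ))ᵀ *ᵥ v with hx
  have hxz : ∀ i : Fin m, c ≤ hS.eigenvalues i → x i = 0 := by
    intro i hi
    have := congrFun hψw ⟨i, hi⟩
    simpa [hψ, hx, hv] using this
  have hvne : v ≠ 0 := by
    intro h0
    exact hw0 (hinj (by rw [← hv, h0, Matrix.mulVec_zero]))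
  have hvpos : 0 < v ⬝ᵥ v := by
    obtain ⟨j, hj⟩ := Function.ne_iff.mp hvne
    exact Finset.sum_pos' (fun i _ => mul_self_nonneg _)
      ⟨j, Finset.mem_univ j, mul_self_pos.mpr hj⟩
  have hxpos : 0 < ∑ i, x i ^ 2 := h2 ▸ hvpos
  obtain ⟨j, hj2⟩ : ∃ j, x j ≠ 0 := by
    by_contra hallz
    push_neg at hallz
    rw [Finset.sum_eq_zero (fun i _ => by rw [hallz i]; ring)] at hxpos
    exact lt_irrefl 0 hxpos
  have hlamj : hS.eigenvalues j < c := by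
    by_contra hcj
    exact hj2 (hxz j (not_lt.mp hcj))
  have hstrict : v ⬝ᵥ S *ᵥ v < c * (v ⬝ᵥ v) := by
    rw [h1, h2, Finset.mul_sum]
    refine Finset.sum_lt_sum (fun i _ => ?_) ⟨j, Finset.mem_univ j, ?_⟩
    · rcases le_or_gt c (hS.eigenvalues i) with h | h
      · rw [hxz i h]; simp
      · exact mul_le_mul_of_nonneg_right h.le (sq_nonneg _)
    · exact mul_lt_mul_of_pos_right hlamj (by positivity)
  exact absurd (hquad w) (not_le.mpr hstrict)

lemma conjTranspose_real {m p : ℕ} (M : Matrix (Fin m) (Fin p) ℝ) : Mᴴ = Mᵀ := by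
  ext i j; simp [Matrix.conjTranspose_apply]

lemma isHermitian_of_symm_real {m : ℕ} {M : Matrix (Fin m) (Fin m) ℝ} (h : Mᵀ = M) :
    M.IsHermitian := by
  show Mᴴ = M
  rw [← Matrix.star_eq_conjTranspose, star_eq_transpose_real, h]

lemma helper_sum_mulVec {m L : ℕ} (M : Fin L → Matrix (Fin m) (Fin m) ℝ) (v : Fin m → ℝ) :
    (∑ l, M l) *ᵥ v = ∑ l, (M l *ᵥ v) := by
  funext i
  simp only [Matrix.mulVec, dotProduct, Finset.sum_apply, Matrix.sum_apply, Finset.sum_mul]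
  exact Finset.sum_comm

lemma helper_dot_sum {m L : ℕ} (v : Fin m → ℝ) (f : Fin L → Fin m → ℝ) :
    v ⬝ᵥ (∑ l, f l) = ∑ l, v ⬝ᵥ f l := by
  simp only [dotProduct, Finset.sum_apply, Finset.mul_sum]
  exact Finset.sum_comm

theorem stmt10 {n L K : ℕ} (hn : 0 < n) (hL : 0 < L) (hK : 0 < K) (hKn : K ≤ n)
    (Z : Matrix (Fin n) (Fin K) ℝ) (θ : Fin n → ℝ)
    (B : Fin L → Matrix (Fin K) (Fin K) ℝ)
    (hmodel : MLDCSBM Z θ B)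
    (hrank : (∑ l, (B l) ^ 2).rank = K) :
    (∑ l, (OmegaL θ Z (B l)) ^ 2).PosSemidef ∧
    thetaMin θ ^ 4 * nMin Z ^ 2 * kthAbsEig (∑ l, (B l) ^ 2) K ≤
      kthAbsEig (∑ l, (OmegaL θ Z (B l)) ^ 2) K := by
  classical
  obtain ⟨⟨hent, hrow, hcol⟩, hθ, hB⟩ := hmodel
  have hne1 : Nonempty (Fin n) := ⟨⟨0, hn⟩⟩
  have hne2 : Nonempty (Fin K) := ⟨⟨0, hK⟩⟩
  -- facts about thetaMin
  have htmem : thetaMin θ ∈ Set.range θ :=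
    (Set.range_nonempty θ).csInf_mem (Set.finite_range θ)
  have htpos : 0 < thetaMin θ := by
    obtain ⟨i, hi⟩ := htmem
    rw [← hi]; exact (hθ i).1
  have htle : ∀ i, thetaMin θ ≤ θ i := fun i =>
    csInf_le (Set.finite_range θ).bddBelow ⟨i, rfl⟩
  -- facts about nMin
  have hZnonneg : ∀ i k, 0 ≤ Z i k := by
    intro i k; rcases hent i k with h | h <;> rw [h] <;> norm_num
  have hnmem : nMin Z ∈ Set.range fun k : Fin K => ∑ i, Z i k :=
    (Set.range_nonempty _).csInf_mem (Set.finite_range _)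
  have hnle : ∀ k, nMin Z ≤ ∑ i, Z i k := fun k =>
    csInf_le (Set.finite_range _).bddBelow ⟨k, rfl⟩
  have hn1 : (1:ℝ) ≤ nMin Z := by
    obtain ⟨k, hk⟩ := hnmem
    rw [← hk]
    obtain ⟨i0, hi0⟩ := hcol k
    calc (1:ℝ) = Z i0 k := hi0.symm
      _ ≤ ∑ i, Z i k := Finset.single_le_sum (fun i _ => hZnonneg i k) (Finset.mem_univ _)
  have hnpos : (0:ℝ) < nMin Z := lt_of_lt_of_le one_pos hn1
  -- the matrix A and Gram diagonal
  set A := Matrix.diagonal θ * Z with hA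
  set g : Fin K → ℝ := fun k => ∑ i, θ i ^ 2 * Z i k with hg
  have hAentry : ∀ i k, A i k = θ i * Z i k := fun i k => Matrix.diagonal_mul θ Z i k
  have hzz : ∀ i (k k' : Fin K), k ≠ k' → Z i k * Z i k' = 0 := by
    intro i k k' hkk
    rcases hent i k with h | h
    · rw [h]; ring
    rcases hent i k' with h' | h'
    · rw [h']; ring
    exfalso
    have hsub := Finset.sum_le_sum_of_subset_of_nonneg
      (Finset.subset_univ ({k, k'} : Finset (Fin K))) (fun x _ _ => hZnonneg i x)
    rw [Finset.sum_pair hkk, h, h', hrow i] at hsub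
    linarith
  have hGram : Aᵀ * A = Matrix.diagonal g := by
    ext k k'
    rw [Matrix.mul_apply]
    by_cases hkk : k = k'
    · subst hkk
      rw [Matrix.diagonal_apply_eq]
      refine Finset.sum_congr rfl fun i _ => ?_
      rw [Matrix.transpose_apply, hAentry]
      rcases hent i k with h | h <;> rw [h] <;> ring
    · rw [Matrix.diagonal_apply_ne _ hkk]
      refine Finset.sum_eq_zero fun i _ => ?_
      rw [Matrix.transpose_apply, hAentry, hAentry]
      have heq : θ i * Z i k * (θ i * Z i k') = θ i ^ 2 * (Z i k * Z i k') := by ring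
      rw [heq, hzz i k k' hkk, mul_zero]
  -- lower bound on g
  set g0 : ℝ := thetaMin θ ^ 2 * nMin Z with hg0
  have hg0pos : 0 < g0 := mul_pos (pow_pos htpos 2) hnpos
  have hgge : ∀ k, g0 ≤ g k := by
    intro k
    calc g0 = thetaMin θ ^ 2 * nMin Z := rfl
      _ ≤ thetaMin θ ^ 2 * ∑ i, Z i k :=
          mul_le_mul_of_nonneg_left (hnle k) (by positivity)
      _ = ∑ i, thetaMin θ ^ 2 * Z i k := Finset.mul_sum _ _ _
      _ ≤ ∑ i, θ i ^ 2 * Z i k := Finset.sum_le_sum fun i _ =>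
          mul_le_mul_of_nonneg_right (pow_le_pow_left₀ htpos.le (htle i) 2) (hZnonneg i k)
  -- dot product identity
  have hAdot : ∀ w y : Fin K → ℝ,
      (A *ᵥ w) ⬝ᵥ (A *ᵥ y) = (Matrix.diagonal g *ᵥ w) ⬝ᵥ y := by
    intro w y
    rw [dot_mulVec_left, Matrix.mulVec_mulVec, hGram]
  -- injectivity of A.mulVec
  have hinj : Function.Injective A.mulVec := by
    intro a b hab
    have hd : A *ᵥ (a - b) = 0 := by
      show A.mulVec (a-b) = 0
      rw [Matrix.mulVec_sub, hab, sub_self]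
    have h0 : (Matrix.diagonal g *ᵥ (a - b)) ⬝ᵥ (a - b) = 0 := by
      rw [← hAdot, hd]; simp
    have hterm : ∀ k ∈ Finset.univ, (0:ℝ) ≤ g k * (a - b) k * (a - b) k := by
      intro k _
      have := hgge k
      nlinarith [mul_self_nonneg ((a-b) k), hg0pos.le]
    have hzero := (Finset.sum_eq_zero_iff_of_nonneg hterm).mp (by
      rw [← h0]
      simp only [dotProduct, Matrix.mulVec_diagonal])
    have hab0 : a - b = 0 := by
      funext k
      have hk := hzero k (Finset.mem_univ k)
      have hgk : 0 < g k := lt_of_lt_of_le hg0pos (hgge k)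
      have : (a - b) k * (a - b) k = 0 := by
        by_contra hcon
        have h1 : 0 < (a-b) k * (a-b) k :=
          lt_of_le_of_ne (mul_self_nonneg _) (Ne.symm hcon)
        nlinarith
      simpa using mul_self_eq_zero.mp this
    exact sub_eq_zero.mp hab0
  -- factorization of Omega
  have hBsym : ∀ l, (B l)ᵀ = B l := fun l => (hB l).1
  have hΩ : ∀ l, OmegaL θ Z (B l) = A * B l * Aᵀ := by
    intro l
    rw [OmegaL, hA, Matrix.transpose_mul, Matrix.diagonal_transpose,
      Matrix.mul_assoc (Matrix.diagonal θ * Z * B l)]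
  have hBherm : ∀ l, (B l).IsHermitian := fun l => isHermitian_of_symm_real (hBsym l)
  have hΩherm : ∀ l, (OmegaL θ Z (B l)).IsHermitian := by
    intro l
    rw [hΩ l, ← conjTranspose_real A]
    exact Matrix.isHermitian_mul_mul_conjTranspose A (hBherm l)
  -- positive semidefiniteness
  have hΩpsd : ∀ l, ((OmegaL θ Z (B l)) ^ 2).PosSemidef := by
    intro l
    have h := Matrix.posSemidef_conjTranspose_mul_self (OmegaL θ Z (B l))
    rwa [(hΩherm l).eq, ← pow_two] at h
  have hSpsd : (∑ l, (OmegaL θ Z (B l)) ^ 2).PosSemidef :=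
    Finset.sum_induction _ _ (fun a b ha hb => ha.add hb) Matrix.PosSemidef.zero
      (fun l _ => hΩpsd l)
  have hB2psd : (∑ l, (B l) ^ 2).PosSemidef := by
    refine Finset.sum_induction _ _ (fun a b ha hb => ha.add hb) Matrix.PosSemidef.zero
      (fun l _ => ?_)
    have h := Matrix.posSemidef_conjTranspose_mul_self (B l)
    rwa [(hBherm l).eq, ← pow_two] at h
  refine ⟨hSpsd, ?_⟩
  have hSherm := hSpsd.1
  have hB2herm := hB2psd.1
  -- beta and its properties
  set β := kthAbsEig (∑ l, (B l) ^ 2) K with hβdef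
  have hβeig : ∀ i, β ≤ hB2herm.eigenvalues i := by
    intro i
    have habs : |hB2herm.eigenvalues i| = hB2herm.eigenvalues i :=
      abs_of_nonneg (hB2psd.eigenvalues_nonneg i)
    rw [hβdef, kthAbsEig, dif_pos hB2herm, Nat.sub_self, ← habs]
    exact sorted_getD_zero_le
      (Multiset.mem_map_of_mem _ (Finset.mem_val.mpr (Finset.mem_univ i)))
  have hβnonneg : 0 ≤ β := by
    rw [hβdef, kthAbsEig, dif_pos hB2herm, Nat.sub_self]
    set s := (Finset.univ : Finset (Fin K)).val.map fun i => |hB2herm.eigenvalues i| with hs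
    have hlen : (s.sort (· ≤ ·)).length = K := by
      rw [Multiset.length_sort, hs, Multiset.card_map]
      simp [Finset.card_univ]
    have hmem := getD_mem_of_lt (l := s.sort (· ≤ ·)) (i := 0) (by omega)
    rw [Multiset.mem_sort] at hmem
    obtain ⟨i, _, hi⟩ := Multiset.mem_map.mp hmem
    rw [← hi]
    exact abs_nonneg _
  -- the quadratic lower bound
  have hred : ∀ l (z : Fin K → ℝ),
      (A * B l * Aᵀ) *ᵥ (A *ᵥ z) = A *ᵥ (B l *ᵥ (Matrix.diagonal g *ᵥ z)) := by
    intro l z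
    rw [Matrix.mulVec_mulVec]
    have : A * B l * Aᵀ * A = A * (B l * Matrix.diagonal g) := by
      rw [Matrix.mul_assoc (A * B l), hGram, Matrix.mul_assoc]
    rw [this, ← Matrix.mulVec_mulVec z A (B l * Matrix.diagonal g),
      ← Matrix.mulVec_mulVec z (B l) (Matrix.diagonal g)]
  have hdiag : ∀ t : Fin K → ℝ, g0 * (t ⬝ᵥ t) ≤ t ⬝ᵥ (Matrix.diagonal g *ᵥ t) := by
    intro t
    simp only [dotProduct, Matrix.mulVec_diagonal, Finset.mul_sum]
    refine Finset.sum_le_sum fun k _ => ?_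
    have := hgge k
    nlinarith [mul_self_nonneg (t k)]
  have hquad : ∀ w : Fin K → ℝ,
      (g0 ^ 2 * β) * ((A *ᵥ w) ⬝ᵥ (A *ᵥ w)) ≤
        (A *ᵥ w) ⬝ᵥ (∑ l, (OmegaL θ Z (B l)) ^ 2) *ᵥ (A *ᵥ w) := by
    intro w
    set u : Fin K → ℝ := Matrix.diagonal g *ᵥ w with hu
    have hId : ∀ l, (A *ᵥ w) ⬝ᵥ (((OmegaL θ Z (B l)) ^ 2) *ᵥ (A *ᵥ w))
        = (B l *ᵥ u) ⬝ᵥ (Matrix.diagonal g *ᵥ (B l *ᵥ u)) := by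
      intro l
      rw [pow_two, hΩ l,
        ← Matrix.mulVec_mulVec (A *ᵥ w) (A * B l * Aᵀ) (A * B l * Aᵀ), hred l w, ← hu,
        hred l (B l *ᵥ u), hAdot w (B l *ᵥ (Matrix.diagonal g *ᵥ (B l *ᵥ u))), ← hu,
        dot_mulVec_left (B l) u (Matrix.diagonal g *ᵥ (B l *ᵥ u)), hBsym l]
    -- step C bounds
    have hyy : ∀ l, (B l *ᵥ u) ⬝ᵥ (B l *ᵥ u) = u ⬝ᵥ (((B l) ^ 2) *ᵥ u) := by
      intro l
      rw [dot_mulVec_left, hBsym l, Matrix.mulVec_mulVec, ← pow_two, dotProduct_comm]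
    have hsum : (A *ᵥ w) ⬝ᵥ (∑ l, (OmegaL θ Z (B l)) ^ 2) *ᵥ (A *ᵥ w)
        = ∑ l, (A *ᵥ w) ⬝ᵥ (((OmegaL θ Z (B l)) ^ 2) *ᵥ (A *ᵥ w)) := by
      rw [helper_sum_mulVec, helper_dot_sum]
    have step1 : ∑ l, g0 * (u ⬝ᵥ (((B l) ^ 2) *ᵥ u)) ≤
        (A *ᵥ w) ⬝ᵥ (∑ l, (OmegaL θ Z (B l)) ^ 2) *ᵥ (A *ᵥ w) := by
      rw [hsum]
      refine Finset.sum_le_sum fun l _ => ?_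
      rw [hId l, ← hyy l]
      exact hdiag (B l *ᵥ u)
    have step2 : g0 * (β * (u ⬝ᵥ u)) ≤ ∑ l, g0 * (u ⬝ᵥ (((B l) ^ 2) *ᵥ u)) := by
      rw [← Finset.mul_sum]
      refine mul_le_mul_of_nonneg_left ?_ hg0pos.le
      have := rayleigh_ge_min hB2herm hβeig u
      calc β * (u ⬝ᵥ u) ≤ u ⬝ᵥ (∑ l, (B l) ^ 2) *ᵥ u := this
        _ = ∑ l, u ⬝ᵥ (((B l) ^ 2) *ᵥ u) := by rw [helper_sum_mulVec, helper_dot_sum]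
    have step3 : g0 * ((A *ᵥ w) ⬝ᵥ (A *ᵥ w)) ≤ u ⬝ᵥ u := by
      rw [hAdot, ← hu]
      simp only [dotProduct, hu, Matrix.mulVec_diagonal, Finset.mul_sum]
      refine Finset.sum_le_sum fun k _ => ?_
      have := hgge k
      nlinarith [mul_self_nonneg (w k), hg0pos.le]
    calc (g0 ^ 2 * β) * ((A *ᵥ w) ⬝ᵥ (A *ᵥ w))
        = g0 * (β * (g0 * ((A *ᵥ w) ⬝ᵥ (A *ᵥ w)))) := by ring
      _ ≤ g0 * (β * (u ⬝ᵥ u)) := by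
          refine mul_le_mul_of_nonneg_left (mul_le_mul_of_nonneg_left step3 hβnonneg) hg0pos.le
      _ ≤ ∑ l, g0 * (u ⬝ᵥ (((B l) ^ 2) *ᵥ u)) := step2
      _ ≤ _ := step1
  -- counting eigenvalues of S
  set c : ℝ := g0 ^ 2 * β with hc
  have hcount := count_ge_of_quad hSherm hinj hquad
  have hfinal : c ≤ kthAbsEig (∑ l, (OmegaL θ Z (B l)) ^ 2) K := by
    rw [kthAbsEig, dif_pos hSherm]
    refine sorted_getD_ge _ ?_ hK hKn ?_
    · rw [Multiset.card_map]; simp [Finset.card_univ]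
    · have h2 : (Finset.univ.filter fun i => c ≤ hSherm.eigenvalues i).card
          ≤ (Finset.univ.filter fun i => c ≤ |hSherm.eigenvalues i|).card :=
        Finset.card_le_card (fun i hi => by
          rw [Finset.mem_filter] at hi ⊢
          exact ⟨hi.1, hi.2.trans (le_abs_self _)⟩)
      rw [← Multiset.countP_eq_card_filter, Multiset.countP_map]
      refine le_trans hcount (le_trans h2 (le_of_eq ?_))
      rw [Finset.card_def, Finset.filter_val]
  calc thetaMin θ ^ 4 * nMin Z ^ 2 * β = c := by rw [hc, hg0]; ring
    _ ≤ _ := hfinal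

end
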